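/- With the cutting setup above, the homomorphism S : T_ω(Q) → T_ω(Q_e) sends every Weyl-ordered Laurent monomial to a Weyl-ordered Laurent monomial: for t ∈ ℤ^V, S(Z^t) = Z^{t'} where t'_w = t_{p(w)} for all w ∈ V_e. -/

import Mathlib

/-- `∑_{i<j} t_{v_i} t_{v_j} Q(v_i, v_j)` along a list enumerating the vertices. -/
def offdiag {V : Type} (Q : V → V → ℤ) (t : V → ℤ) : List V → ℤ
  | [] => 0
  | v :: l => (l.map fun w => t v * t w * Q v w).sum + offdiag Q t l

/-- The image of a unit of `R` in the units of an `R`-algebra `A`. -/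
noncomputable def unitsMap {R A : Type} [CommRing R] [Ring A] [Algebra R A] (w : Rˣ) : Aˣ :=
  Units.map (algebraMap R A).toMonoidHom w

/-- The Weyl-ordered Laurent monomial `Z^t` with respect to an enumeration `l` of `V`. -/
noncomputable def weylList {R A V : Type} [CommRing R] [Ring A] [Algebra R A]
    (w : Rˣ) (Q : V → V → ℤ) (Z : V → Aˣ) (t : V → ℤ) (l : List V) : Aˣ :=
  unitsMap (A := A) w ^ (-(offdiag Q t l)) * (l.map fun v => Z v ^ t v).prod

section helpers

variable {R A : Type} [CommRing R] [Ring A] [Algebra R A] (w : Rˣ)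

lemma unitsMap_commute (u : Aˣ) : Commute (unitsMap (A := A) w) u := by
  ext
  simp only [Units.val_mul, unitsMap, Units.coe_map, RingHom.toMonoidHom_eq_coe,
    MonoidHom.coe_coe]
  exact Algebra.commutes _ _

lemma cent_pull (m : ℤ) (u x : Aˣ) :
    u * (unitsMap (A := A) w ^ m * x) = unitsMap (A := A) w ^ m * (u * x) := by
  rw [← mul_assoc, ← ((unitsMap_commute w u).zpow_left m).eq, mul_assoc]

lemma zpow_comm_one (a b : Aˣ) (q : ℤ)
    (h : a * b = unitsMap (A := A) w ^ q * (b * a)) (n : ℤ) :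
    a * b ^ n = unitsMap (A := A) w ^ (q * n) * (b ^ n * a) := by
  have hconj : a * b * a⁻¹ = unitsMap (A := A) w ^ q * b := by
    rw [h, mul_assoc, mul_assoc, mul_inv_cancel, mul_one]
  have h2 : a * b ^ n * a⁻¹ = unitsMap (A := A) w ^ (q * n) * b ^ n := by
    rw [← conj_zpow, hconj,
      (((unitsMap_commute w b).zpow_left q)).mul_zpow, ← zpow_mul]
  calc a * b ^ n = a * b ^ n * a⁻¹ * a := by group
    _ = unitsMap (A := A) w ^ (q * n) * b ^ n * a := by rw [h2]
    _ = _ := by rw [mul_assoc]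

lemma zpow_comm_two (a b : Aˣ) (q : ℤ)
    (h : a * b = unitsMap (A := A) w ^ q * (b * a)) (m n : ℤ) :
    a ^ m * b ^ n = unitsMap (A := A) w ^ (q * m * n) * (b ^ n * a ^ m) := by
  have h1 := zpow_comm_one w a b q h n
  have h2 : b ^ n * a = unitsMap (A := A) w ^ (-(q * n)) * (a * b ^ n) := by
    rw [h1, ← mul_assoc, ← zpow_add]; simp
  have h3 := zpow_comm_one w (b ^ n) a (-(q * n)) h2 m
  rw [h3, ← mul_assoc, ← zpow_add, show q * m * n + -(q * n) * m = 0 by ring, zpow_zero,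
    one_mul]

lemma offdiag_append {V : Type} (Q : V → V → ℤ) (t : V → ℤ) (l₁ l₂ : List V) :
    offdiag Q t (l₁ ++ l₂) = offdiag Q t l₁ + offdiag Q t l₂
      + (l₁.map fun x => (l₂.map fun y => t x * t y * Q x y).sum).sum := by
  induction l₁ with
  | nil => simp [offdiag]
  | cons v l₁ ih => simp [offdiag, ih]; ring

lemma offdiag_zero {V : Type} (Q : V → V → ℤ) (t : V → ℤ) (l : List V)
    (h : ∀ x ∈ l, ∀ y ∈ l, Q x y = 0) : offdiag Q t l = 0 := by
  induction l with
  | nil => rfl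
  | cons v l ih =>
    simp only [offdiag]
    rw [ih fun x hx y hy => h x (List.mem_cons_of_mem _ hx) y (List.mem_cons_of_mem _ hy),
      List.sum_eq_zero, add_zero]
    intro z hz
    obtain ⟨y, hy, rfl⟩ := List.mem_map.1 hz
    rw [h v List.mem_cons_self y (List.mem_cons_of_mem _ hy), mul_zero]

lemma prod_map_flatMap {M : Type} [Monoid M] {V W : Type} (g : W → M) (f : V → List W)
    (L : List V) :
    ((L.flatMap f).map g).prod = (L.map fun v => ((f v).map g).prod).prod := by
  induction L with
  | nil => rfl
  | cons v L ih => simp [List.flatMap_cons, ih]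

lemma sum_map_flatMap {V W : Type} (g : W → ℤ) (f : V → List W) (L : List V) :
    ((L.flatMap f).map g).sum = (L.map fun v => ((f v).map g).sum).sum := by
  induction L with
  | nil => rfl
  | cons v L ih => simp [List.flatMap_cons, ih]

end helpers

section perm

variable {R A : Type} [CommRing R] [Ring A] [Algebra R A] (w : Rˣ)

lemma zpow_mul_zpow_mul (a b : ℤ) (x : Aˣ) :
    unitsMap (A := A) w ^ a * (unitsMap (A := A) w ^ b * x)
      = unitsMap (A := A) w ^ (a + b) * x := by
  rw [← mul_assoc, ← zpow_add]

lemma weylList_cons {V : Type} (Q : V → V → ℤ) (Z : V → Aˣ) (t : V → ℤ) (x : V) (l : List V) :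
    weylList w Q Z t (x :: l)
      = unitsMap (A := A) w ^ (-((l.map fun y => t x * (t y * Q x y)).sum))
        * (Z x ^ t x * weylList w Q Z t l) := by
  simp only [weylList, offdiag, List.map_cons, List.prod_cons, mul_assoc]
  rw [neg_add, zpow_add, mul_assoc]
  congr 1
  rw [cent_pull]

lemma weylList_perm {V : Type} (Q : V → V → ℤ) (hQa : ∀ x y, Q x y = - Q y x)
    (Z : V → Aˣ) (t : V → ℤ)
    (hrel : ∀ x y, Z x * Z y = unitsMap (A := A) w ^ (2 * Q x y) * (Z y * Z x))
    {l₁ l₂ : List V} (h : l₁.Perm l₂) :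
    weylList w Q Z t l₁ = weylList w Q Z t l₂ := by
  induction h with
  | nil => rfl
  | cons x h ih => rw [weylList_cons, weylList_cons, ih, (h.map _).sum_eq]
  | swap x y l =>
    rw [weylList_cons, weylList_cons, weylList_cons, weylList_cons]
    simp only [List.map_cons, List.sum_cons]
    rw [cent_pull, cent_pull, ← mul_assoc (Z y ^ t y), ← mul_assoc (Z x ^ t x),
      zpow_comm_two w (Z y) (Z x) (2 * Q y x) (hrel y x) (t y) (t x)]
    simp only [mul_assoc, zpow_mul_zpow_mul w, cent_pull w]
    congr 2
    rw [hQa y x]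
    ring
  | trans _ _ ih1 ih2 => exact ih1.trans ih2

end perm

section cross

lemma cross_append {W0 : Type} (Q : W0 → W0 → ℤ) (t : W0 → ℤ) (l₁ l₂ l₃ : List W0) :
    (l₁.map fun x => ((l₂ ++ l₃).map fun y => t x * t y * Q x y).sum).sum
      = (l₁.map fun x => (l₂.map fun y => t x * t y * Q x y).sum).sum
        + (l₁.map fun x => (l₃.map fun y => t x * t y * Q x y).sum).sum := by
  induction l₁ with
  | nil => simp
  | cons v l₁ ih => simp only [List.map_cons, List.sum_cons, List.map_append,
      List.sum_append, ih, List.sum_map_add]; ring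

lemma cross_block {V W0 : Type} (p : W0 → V) (Qe : W0 → W0 → ℤ) (t : V → ℤ)
    (f : V → List W0) (v v' : V)
    (hf : ∀ u, ∀ x ∈ f u, p x = u) :
    ((f v).map fun x => ((f v').map fun y => t (p x) * t (p y) * Qe x y).sum).sum
      = t v * t v' * ((f v).map fun x => ((f v').map fun y => Qe x y).sum).sum := by
  rw [← List.sum_map_mul_left]
  apply congrArg
  apply List.map_congr_left
  intro x hx
  rw [← List.sum_map_mul_left]
  apply congrArg
  apply List.map_congr_left
  intro y hy
  rw [hf v x hx, hf v' y hy]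

lemma cross_flatMap {V W0 : Type} (p : W0 → V) (Qe : W0 → W0 → ℤ) (Q : V → V → ℤ)
    (t : V → ℤ) (f : V → List W0) (v : V) (L : List V)
    (hf : ∀ u, ∀ x ∈ f u, p x = u)
    (hQl : ∀ u u', ((f u).map fun x => ((f u').map fun y => Qe x y).sum).sum = Q u u') :
    ((f v).map fun x => ((L.flatMap f).map fun y => t (p x) * t (p y) * Qe x y).sum).sum
      = (L.map fun w' => t v * t w' * Q v w').sum := by
  induction L with
  | nil => simp
  | cons v' L ih =>
    rw [List.flatMap_cons, cross_append, ih, List.map_cons, List.sum_cons,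
      cross_block p Qe t f v v' hf, hQl v v']

lemma offdiag_flatMap {V W0 : Type} (p : W0 → V) (Qe : W0 → W0 → ℤ) (Q : V → V → ℤ)
    (t : V → ℤ) (f : V → List W0) (L : List V)
    (hf : ∀ u, ∀ x ∈ f u, p x = u)
    (h0 : ∀ x y, p x = p y → Qe x y = 0)
    (hQl : ∀ u u', ((f u).map fun x => ((f u').map fun y => Qe x y).sum).sum = Q u u') :
    offdiag Qe (fun x => t (p x)) (L.flatMap f) = offdiag Q t L := by
  induction L with
  | nil => rfl
  | cons v L ih =>
    rw [List.flatMap_cons, offdiag_append, ih,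
      offdiag_zero _ _ _ (fun x hx y hy => h0 x y (by rw [hf v x hx, hf v y hy])), zero_add,
      cross_flatMap p Qe Q t f v L hf hQl]
    simp only [offdiag]
    ring

lemma sort_map_sum {α : Type} [LinearOrder α] (s : Finset α) (g : α → ℤ) :
    ((s.sort (· ≤ ·)).map g).sum = ∑ x ∈ s, g x := by
  rw [((s.sort_perm_toList (· ≤ ·)).map g).sum_eq, Finset.sum_map_toList]

end cross

lemma list_prod_zpow {G : Type} [Group G] (l : List G) (hl : l.length ≤ 2)
    (hcomm : ∀ x ∈ l, ∀ y ∈ l, Commute x y) (n : ℤ) :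
    l.prod ^ n = (l.map (· ^ n)).prod := by
  match l with
  | [] => simp
  | [a] => simp
  | [a, b] =>
    have h := hcomm a (by simp) b (by simp)
    simp [h.mul_zpow]
  | a :: b :: c :: l' => simp at hl

/-- In the cutting setup, the splitting homomorphism `S` (determined by
`S(Z_v) = ∏_{w ∈ p⁻¹(v)} Z_w`) sends every Weyl-ordered Laurent monomial to a
Weyl-ordered Laurent monomial: `S(Z^t) = Z^{t'}` with `t'_w = t_{p(w)}`. -/
theorem stmt13 {R : Type} [CommRing R] (w σ : Rˣ) (hσ : σ * σ = w)
    {V Ve : Type} [Fintype V] [LinearOrder V] [Fintype Ve] [LinearOrder Ve]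
    (p : Ve → V) (hp : Function.Surjective p)
    (hfib : ∀ v, (Finset.univ.filter fun x => p x = v).card ≤ 2)
    (Qe : Ve → Ve → ℤ) (hQe : ∀ x y, Qe x y = - Qe y x)
    (hQe0 : ∀ x y, x ≠ y → p x = p y → Qe x y = 0)
    (Q : V → V → ℤ) (hQanti : ∀ u v, Q u v = - Q v u)
    (hQ : ∀ u v, Q u v = ∑ x ∈ Finset.univ.filter (fun x => p x = u),
        ∑ y ∈ Finset.univ.filter (fun y => p y = v), Qe x y)
    (A Ae : Type) [Ring A] [Algebra R A] [Ring Ae] [Algebra R Ae]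
    (Z : V → Aˣ) (Ze : Ve → Aeˣ)
    (hrel : ∀ v v', Z v * Z v' = unitsMap (A := A) w ^ (2 * Q v v') * (Z v' * Z v))
    (hrele : ∀ x y, Ze x * Ze y = unitsMap (A := Ae) w ^ (2 * Qe x y) * (Ze y * Ze x))
    (S : A →ₐ[R] Ae)
    (hS : ∀ v, S ((Z v : A)) =
      (((Finset.univ.filter fun x => p x = v).sort (· ≤ ·)).map
        fun x => ((Ze x : Ae))).prod) :
    ∀ t : V → ℤ,
      S ((weylList w Q Z t (Finset.univ.sort (· ≤ ·)) : Aˣ) : A)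
        = ((weylList w Qe Ze (fun x => t (p x)) (Finset.univ.sort (· ≤ ·)) : Aeˣ) : Ae) := by
  intro t
  classical
  set f : V → List Ve := fun v => (Finset.univ.filter fun x => p x = v).sort (· ≤ ·) with hfdef
  set L : List V := Finset.univ.sort (· ≤ ·) with hLdef
  have hf : ∀ u, ∀ x ∈ f u, p x = u := by
    intro u x hx
    exact (Finset.mem_filter.1 ((Finset.mem_sort (· ≤ ·)).1 hx)).2
  have h0 : ∀ x y, p x = p y → Qe x y = 0 := by
    intro x y hxy
    by_cases hxyeq : x = y
    · subst hxyeq; have := hQe x x; omega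
    · exact hQe0 x y hxyeq hxy
  have hQl : ∀ u u', ((f u).map fun x => ((f u').map fun y => Qe x y).sum).sum = Q u u' := by
    intro u u'
    rw [hQ u u',
      show ((f u).map fun x => ((f u').map fun y => Qe x y).sum)
          = (f u).map fun x => ∑ y ∈ Finset.univ.filter (fun y => p y = u'), Qe x y from
        List.map_congr_left fun x _ => sort_map_sum _ _]
    exact sort_map_sum _ _
  set Su : Aˣ →* Aeˣ := Units.map (S : A →+* Ae).toMonoidHom with hSudef
  have hSu : ∀ u : Aˣ, S ((u : A)) = ((Su u : Aeˣ) : Ae) := by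
    intro u
    simp [hSudef]
  have hW : Su (unitsMap (A := A) w) = unitsMap (A := Ae) w := by
    ext
    simp only [hSudef, unitsMap, Units.coe_map, RingHom.toMonoidHom_eq_coe, MonoidHom.coe_coe]
    exact S.commutes _
  have hZ : ∀ v, Su (Z v) = ((f v).map Ze).prod := by
    intro v
    ext
    rw [show ((Su (Z v) : Aeˣ) : Ae) = S ((Z v : A)) from (hSu (Z v)).symm, hS v]
    rw [show (((((f v).map Ze).prod : Aeˣ)) : Ae) = _ from map_list_prod (Units.coeHom Ae) _,
      List.map_map]
    rfl
  have hfibpow : ∀ v (n : ℤ),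
      (((f v).map Ze).prod) ^ n = ((f v).map fun x => Ze x ^ n).prod := by
    intro v n
    rw [list_prod_zpow ((f v).map Ze) ?hl ?hc n, List.map_map]
    case _ => rfl
    case hl =>
      rw [List.length_map, hfdef]
      simpa [Finset.length_sort] using hfib v
    case hc =>
      intro a ha b hb
      obtain ⟨x, hx, rfl⟩ := List.mem_map.1 ha
      obtain ⟨y, hy, rfl⟩ := List.mem_map.1 hb
      by_cases hxy : x = y
      · subst hxy; exact Commute.refl _
      · have := hrele x y
        rw [h0 x y (by rw [hf v x hx, hf v y hy])] at this
        exact (by simpa using this : Ze x * Ze y = Ze y * Ze x)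
  have main : Su (weylList w Q Z t L) = weylList w Qe Ze (fun x => t (p x)) (L.flatMap f) := by
    rw [weylList, weylList, map_mul, map_zpow, hW,
      offdiag_flatMap p Qe Q t f L hf h0 hQl]
    congr 1
    rw [map_list_prod, List.map_map, prod_map_flatMap]
    apply congrArg
    apply List.map_congr_left
    intro v hv
    show Su (Z v ^ t v) = ((f v).map fun x => Ze x ^ t (p x)).prod
    rw [map_zpow, hZ v, hfibpow v (t v)]
    apply congrArg
    apply List.map_congr_left
    intro x hx
    rw [hf v x hx]
  have hperm : (L.flatMap f).Perm (Finset.univ.sort (· ≤ ·) : List Ve) := by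
    apply List.perm_of_nodup_nodup_toFinset_eq
    · rw [List.nodup_flatMap]
      refine ⟨fun v _ => by rw [hfdef]; exact Finset.sort_nodup _ _, ?_⟩
      have hnd : L.Nodup := Finset.sort_nodup _ _
      exact hnd.imp fun {a b} hne x hx hx' => hne (by rw [← hf a x hx, ← hf b x hx'])
    · exact Finset.sort_nodup _ _
    · rw [Finset.sort_toFinset]
      apply Finset.eq_univ_of_forall
      intro x
      rw [List.mem_toFinset, List.mem_flatMap]
      exact ⟨p x, by rw [hLdef]; simp [Finset.mem_sort],
        by rw [hfdef]; simp [Finset.mem_sort, Finset.mem_filter]⟩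
  calc S ((weylList w Q Z t L : Aˣ) : A)
      = ((Su (weylList w Q Z t L) : Aeˣ) : Ae) := hSu _
    _ = ((weylList w Qe Ze (fun x => t (p x)) (L.flatMap f) : Aeˣ) : Ae) := by rw [main]
    _ = _ := by
        rw [weylList_perm w Qe hQe Ze (fun x => t (p x)) hrele hperm]
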